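/- Let H be a graph on the vertex set ⋃𝒳 where 𝒳 is the F-partition family of vertex classes X^a_i (a ∈ {3,4,5}, i ∈ [a], with X^a_1 refined into X^{a,3}_1, X^{a,4}_1, X^{a,5}_1), and suppose all edges of H lie inside the classes. Then H is an edge-disjoint union of atoms if and only if (1) e_H(X^a_1) = e_H(X^a_2) = ... = e_H(X^a_a) for all a ∈ {3,4,5}, and (2) e_H(X^{a,b}_1) = e_H(X^{b,a}_1) for all a, b ∈ {3,4,5}. -/
import Mathlib


open Finset

variable {V : Type*} [Fintype V] [DecidableEq V]

/-- The index set `{3,4,5}`. -/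
def threeFourFive : Finset ℕ := {3, 4, 5}

/-- `O` is an `{a}`-atom: a matching of `a` edges, one inside `X^{a,a}_1 = Xab a a`
and one inside each `X^a_i = Xi a i` for `i ∈ {2,…,a}`. -/
def IsSingleAtom (Xab : ℕ → ℕ → Finset V) (Xi : ℕ → ℕ → Finset V) (a : ℕ)
    (O : Finset (Sym2 V)) : Prop :=
  O.card = a ∧ (O.filter (· ∈ (Xab a a).sym2)).card = 1 ∧
    ∀ i ∈ Finset.Icc 2 a, (O.filter (· ∈ (Xi a i).sym2)).card = 1

/-- `O` is an `{a,b}`-atom (for `a ≠ b`): a matching of `a+b` edges, one inside each of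
`X^{a,b}_1`, `X^{b,a}_1`, each `X^a_i` (`2 ≤ i ≤ a`) and each `X^b_i` (`2 ≤ i ≤ b`). -/
def IsPairAtom (Xab : ℕ → ℕ → Finset V) (Xi : ℕ → ℕ → Finset V) (a b : ℕ)
    (O : Finset (Sym2 V)) : Prop :=
  O.card = a + b ∧ (O.filter (· ∈ (Xab a b).sym2)).card = 1 ∧
    (O.filter (· ∈ (Xab b a).sym2)).card = 1 ∧
    (∀ i ∈ Finset.Icc 2 a, (O.filter (· ∈ (Xi a i).sym2)).card = 1) ∧
    (∀ i ∈ Finset.Icc 2 b, (O.filter (· ∈ (Xi b i).sym2)).card = 1)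

/-- `O` is an atom. -/
def IsAtomOf (Xab : ℕ → ℕ → Finset V) (Xi : ℕ → ℕ → Finset V)
    (O : Finset (Sym2 V)) : Prop :=
  (∃ a ∈ threeFourFive, IsSingleAtom Xab Xi a O) ∨
    (∃ a ∈ threeFourFive, ∃ b ∈ threeFourFive, a ≠ b ∧ IsPairAtom Xab Xi a b O)

set_option linter.unusedSectionVars false
set_option maxHeartbeats 1000000

lemma sym2_disj {X Y : Finset V} (h : Disjoint X Y) {e : Sym2 V}
    (hX : e ∈ X.sym2) (hY : e ∈ Y.sym2) : False := by
  induction e with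
  | _ x y =>
    rw [Finset.mk_mem_sym2_iff] at hX hY
    exact Finset.disjoint_left.mp h hX.1 hY.1

def classSet (Xab Xi : ℕ → ℕ → Finset V) : Bool × ℕ × ℕ → Finset V
  | (true, u, v) => Xab u v
  | (false, u, v) => Xi u v

def ValidIdx : Bool × ℕ × ℕ → Prop
  | (true, u, v) => u ∈ threeFourFive ∧ v ∈ threeFourFive
  | (false, u, v) => u ∈ threeFourFive ∧ v ∈ Finset.Icc 2 u


lemma zero_lemma {ι : Type*} [DecidableEq ι] (O : Finset (Sym2 V)) (I : Finset ι)
    (C : ι → Finset V)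
    (hdisj : ∀ i ∈ I, ∀ j ∈ I, i ≠ j → Disjoint (C i) (C j))
    (hsum : ∑ i ∈ I, (O.filter (· ∈ (C i).sym2)).card = O.card)
    (X : Finset V) (hX : ∀ i ∈ I, Disjoint (C i) X) :
    O.filter (· ∈ X.sym2) = ∅ := by
  have hpd : ∀ i ∈ I, ∀ j ∈ I, i ≠ j →
      Disjoint (O.filter (· ∈ (C i).sym2)) (O.filter (· ∈ (C j).sym2)) := by
    intro i hi j hj hij
    rw [Finset.disjoint_left]
    intro e he he'
    rw [Finset.mem_filter] at he he'
    exact sym2_disj (hdisj i hi j hj hij) he.2 he'.2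
  have hU : (I.biUnion fun i => O.filter (· ∈ (C i).sym2)) = O := by
    apply Finset.eq_of_subset_of_card_le
    · intro e he; rw [Finset.mem_biUnion] at he; obtain ⟨i, _, he⟩ := he
      exact (Finset.mem_filter.mp he).1
    · rw [Finset.card_biUnion hpd, hsum]
  rw [Finset.filter_eq_empty_iff]
  intro e he heX
  rw [← hU, Finset.mem_biUnion] at he
  obtain ⟨i, hi, he⟩ := he
  exact sym2_disj (hX i hi) (Finset.mem_filter.mp he).2 heX

lemma classSet_disjoint (Xab Xi : ℕ → ℕ → Finset V)
    (hdisj1 : ∀ a ∈ threeFourFive, ∀ b ∈ threeFourFive, ∀ a' ∈ threeFourFive,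
      ∀ b' ∈ threeFourFive, (a, b) ≠ (a', b') → Disjoint (Xab a b) (Xab a' b'))
    (hdisj2 : ∀ a ∈ threeFourFive, ∀ i ∈ Finset.Icc 2 a, ∀ a' ∈ threeFourFive,
      ∀ i' ∈ Finset.Icc 2 a', (a, i) ≠ (a', i') → Disjoint (Xi a i) (Xi a' i'))
    (hdisj3 : ∀ a ∈ threeFourFive, ∀ b ∈ threeFourFive, ∀ a' ∈ threeFourFive,
      ∀ i' ∈ Finset.Icc 2 a', Disjoint (Xab a b) (Xi a' i')) :
    ∀ x y, ValidIdx x → ValidIdx y → x ≠ y →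
      Disjoint (classSet Xab Xi x) (classSet Xab Xi y) := by
  rintro ⟨(_|_), u, v⟩ ⟨(_|_), u', v'⟩ hx hy hne
  · exact hdisj2 u hx.1 v hx.2 u' hy.1 v' hy.2 (by simpa [Prod.ext_iff] using hne)
  · exact (hdisj3 u' hy.1 v' hy.2 u hx.1 v hx.2).symm
  · exact hdisj3 u hx.1 v hx.2 u' hy.1 v' hy.2
  · exact hdisj1 u hx.1 v hx.2 u' hy.1 v' hy.2 (by simpa [Prod.ext_iff] using hne)

lemma transversal {ι : Type*} [DecidableEq ι] (E : Finset (Sym2 V)) (I : Finset ι)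
    (C : ι → Finset V)
    (hdisj : ∀ i ∈ I, ∀ j ∈ I, i ≠ j → Disjoint (C i) (C j))
    (hne : ∀ i ∈ I, (E.filter (· ∈ (C i).sym2)).Nonempty) :
    ∃ O : Finset (Sym2 V), O ⊆ E ∧ O.card = I.card ∧
      (∀ i ∈ I, (O.filter (· ∈ (C i).sym2)).card = 1) ∧
      (∀ X : Finset V, (∀ i ∈ I, Disjoint (C i) X) → O.filter (· ∈ X.sym2) = ∅) := by
  set g : (i : I) → Sym2 V := fun i => (hne i i.2).choose with hg
  have hgE : ∀ i : I, g i ∈ E ∧ g i ∈ (C i).sym2 := fun i => by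
    have := (hne i i.2).choose_spec
    rw [Finset.mem_filter] at this; exact this
  refine ⟨I.attach.image g, ?_, ?_, ?_, ?_⟩
  · intro e he
    rw [Finset.mem_image] at he; obtain ⟨i, _, rfl⟩ := he
    exact (hgE i).1
  · rw [Finset.card_image_of_injOn, Finset.card_attach]
    intro i _ j _ hij
    by_contra hne'
    exact sym2_disj (hdisj i i.2 j j.2 (fun h => hne' (Subtype.ext h))) ((hgE i).2)
      (hij ▸ (hgE j).2)
  · intro i hi
    have : (I.attach.image g).filter (· ∈ (C i).sym2) = {g ⟨i, hi⟩} := by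
      apply Finset.Subset.antisymm
      · intro e he
        rw [Finset.mem_filter, Finset.mem_image] at he
        obtain ⟨⟨j, hj⟩, _, rfl⟩ := he.1
        rw [Finset.mem_singleton]
        by_contra hne'
        refine sym2_disj (hdisj j hj i hi ?_) (hgE ⟨j, hj⟩).2 he.2
        rintro rfl
        exact hne' rfl
      · intro e he
        rw [Finset.mem_singleton] at he; subst he
        rw [Finset.mem_filter]
        exact ⟨Finset.mem_image_of_mem _ (Finset.mem_attach _ _), (hgE ⟨i, hi⟩).2⟩
    rw [this, Finset.card_singleton]
  · intro X hX
    rw [Finset.filter_eq_empty_iff]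
    intro e he heX
    rw [Finset.mem_image] at he; obtain ⟨i, _, rfl⟩ := he
    exact sym2_disj (hX i i.2) (hgE i).2 heX

lemma step (Xab Xi : ℕ → ℕ → Finset V)
    (hcds : ∀ x y, ValidIdx x → ValidIdx y → x ≠ y →
      Disjoint (classSet Xab Xi x) (classSet Xab Xi y))
    (E : Finset (Sym2 V)) (I : Finset (Bool × ℕ × ℕ))
    (hIv : ∀ j ∈ I, ValidIdx j)
    (hne : ∀ j ∈ I, (E.filter (· ∈ (classSet Xab Xi j).sym2)).Nonempty) :
    ∃ O : Finset (Sym2 V), O ⊆ E ∧ O.card = I.card ∧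
      (∀ j ∈ I, (O.filter (· ∈ (classSet Xab Xi j).sym2)).card = 1) ∧
      (∀ j, ValidIdx j → j ∉ I →
        ((E \ O).filter (· ∈ (classSet Xab Xi j).sym2)).card
          = (E.filter (· ∈ (classSet Xab Xi j).sym2)).card) ∧
      (∀ j ∈ I, ((E \ O).filter (· ∈ (classSet Xab Xi j).sym2)).card
          = (E.filter (· ∈ (classSet Xab Xi j).sym2)).card - 1) := by
  obtain ⟨O, hsub, hcard, hone, hzero⟩ := transversal E I (classSet Xab Xi)
    (fun i hi j hj hij => hcds i j (hIv i hi) (hIv j hj) hij) hne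
  have hfs : ∀ X : Finset V, ((E \ O).filter (· ∈ X.sym2)).card
      = (E.filter (· ∈ X.sym2)).card - (O.filter (· ∈ X.sym2)).card := by
    intro X
    have h : (E \ O).filter (· ∈ X.sym2) = E.filter (· ∈ X.sym2) \ O.filter (· ∈ X.sym2) := by
      ext e
      simp only [Finset.mem_filter, Finset.mem_sdiff]
      tauto
    rw [h, Finset.card_sdiff_of_subset (Finset.filter_subset_filter _ hsub)]
  refine ⟨O, hsub, hcard, hone, ?_, ?_⟩
  · intro j hvj hnj
    have h0 : O.filter (· ∈ (classSet Xab Xi j).sym2) = ∅ :=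
      hzero _ (fun i hi => hcds i j (hIv i hi) hvj (fun h => hnj (h ▸ hi)))
    rw [hfs, h0, Finset.card_empty, Nat.sub_zero]
  · intro j hj
    rw [hfs, hone j hj]

lemma union_card (Xab Xi : ℕ → ℕ → Finset V)
    (hcds : ∀ x y, ValidIdx x → ValidIdx y → x ≠ y →
      Disjoint (classSet Xab Xi x) (classSet Xab Xi y))
    (E : Finset (Sym2 V))
    (hinE : ∀ e ∈ E, ∃ j, ValidIdx j ∧ e ∈ (classSet Xab Xi j).sym2)
    {a : ℕ} (ha : a ∈ threeFourFive) :
    (E.filter (· ∈ (Xab a 3 ∪ Xab a 4 ∪ Xab a 5).sym2)).card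
      = ∑ b ∈ threeFourFive, (E.filter (· ∈ (Xab a b).sym2)).card := by
  have key : ∀ e ∈ E, e ∈ (Xab a 3 ∪ Xab a 4 ∪ Xab a 5).sym2 ↔
      (e ∈ (Xab a 3).sym2 ∨ e ∈ (Xab a 4).sym2 ∨ e ∈ (Xab a 5).sym2) := by
    intro e he
    constructor
    · intro hu
      obtain ⟨j, hvj, hej⟩ := hinE e he
      induction e with
      | _ x y =>
        rw [Finset.mk_mem_sym2_iff] at hu hej
        have hx := hu.1
        rw [Finset.mem_union, Finset.mem_union] at hx
        have main : ∀ c, c ∈ threeFourFive → x ∈ Xab a c → s(x, y) ∈ (Xab a c).sym2 := by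
          intro c hc hxc
          by_cases hj : j = (true, a, c)
          · subst hj
            rw [Finset.mk_mem_sym2_iff]
            exact hej
          · exact absurd hxc (Finset.disjoint_left.mp
              (hcds j (true, a, c) hvj ⟨ha, hc⟩ hj) hej.1)
        rcases hx with (h | h) | h
        · exact Or.inl (main 3 (by decide) h)
        · exact Or.inr (Or.inl (main 4 (by decide) h))
        · exact Or.inr (Or.inr (main 5 (by decide) h))
    · intro h
      have mono : ∀ X Y : Finset V, X ⊆ Y → e ∈ X.sym2 → e ∈ Y.sym2 := by
        intro X Y hXY heX
        rw [Finset.mem_sym2_iff] at heX ⊢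
        exact fun y hy => hXY (heX y hy)
      rcases h with h | h | h
      · exact mono _ _ (Finset.subset_union_left.trans Finset.subset_union_left) h
      · exact mono _ _ (Finset.subset_union_right.trans Finset.subset_union_left) h
      · exact mono _ _ Finset.subset_union_right h
  have hdAB : ∀ c c', c ∈ threeFourFive → c' ∈ threeFourFive → c ≠ c' →
      Disjoint (Xab a c) (Xab a c') := by
    intro c c' hc hc' hcc
    exact hcds (true, a, c) (true, a, c') ⟨ha, hc⟩ ⟨ha, hc'⟩ (by simp [Prod.ext_iff, hcc])
  have hrw : E.filter (· ∈ (Xab a 3 ∪ Xab a 4 ∪ Xab a 5).sym2)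
      = E.filter (fun e => e ∈ (Xab a 3).sym2 ∨ e ∈ (Xab a 4).sym2 ∨ e ∈ (Xab a 5).sym2) :=
    Finset.filter_congr (fun e he => by rw [key e he])
  have hd1 : Disjoint (E.filter (· ∈ (Xab a 4).sym2)) (E.filter (· ∈ (Xab a 5).sym2)) := by
    rw [Finset.disjoint_left]
    intro e h1 h2
    exact sym2_disj (hdAB 4 5 (by decide) (by decide) (by decide))
      (Finset.mem_filter.mp h1).2 (Finset.mem_filter.mp h2).2
  have hd2 : Disjoint (E.filter (· ∈ (Xab a 3).sym2))
      ((E.filter (· ∈ (Xab a 4).sym2)) ∪ (E.filter (· ∈ (Xab a 5).sym2))) := by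
    rw [Finset.disjoint_left]
    intro e h1 h2
    rw [Finset.mem_union] at h2
    rcases h2 with h2 | h2
    · exact sym2_disj (hdAB 3 4 (by decide) (by decide) (by decide))
        (Finset.mem_filter.mp h1).2 (Finset.mem_filter.mp h2).2
    · exact sym2_disj (hdAB 3 5 (by decide) (by decide) (by decide))
        (Finset.mem_filter.mp h1).2 (Finset.mem_filter.mp h2).2
  have sum_tff : ∀ g : ℕ → ℕ, ∑ b ∈ threeFourFive, g b = g 3 + g 4 + g 5 := by
    intro g
    show ∑ b ∈ ({3, 4, 5} : Finset ℕ), g b = _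
    rw [Finset.sum_insert (by decide), Finset.sum_insert (by decide), Finset.sum_singleton]
    ring
  rw [hrw, Finset.filter_or, Finset.filter_or, Finset.card_union_of_disjoint hd2,
    Finset.card_union_of_disjoint hd1, sum_tff]
  ring


def singleIdx (a : ℕ) : Finset (Bool × ℕ × ℕ) :=
  insert (true, a, a) ((Finset.Icc 2 a).image fun i => (false, a, i))

def pairIdx (a b : ℕ) : Finset (Bool × ℕ × ℕ) :=
  insert (true, a, b) (insert (true, b, a)
    (((Finset.Icc 2 a).image fun i => (false, a, i)) ∪
      ((Finset.Icc 2 b).image fun i => (false, b, i))))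

lemma mem_singleIdx {a : ℕ} {x : Bool × ℕ × ℕ} :
    x ∈ singleIdx a ↔ x = (true, a, a) ∨ (x.1 = false ∧ x.2.1 = a ∧ x.2.2 ∈ Finset.Icc 2 a) := by
  obtain ⟨u, v, w⟩ := x
  simp [singleIdx, Prod.ext_iff, eq_comm, and_comm, and_left_comm]
  aesop

lemma mem_pairIdx {a b : ℕ} {x : Bool × ℕ × ℕ} :
    x ∈ pairIdx a b ↔ x = (true, a, b) ∨ x = (true, b, a) ∨
      (x.1 = false ∧ x.2.1 = a ∧ x.2.2 ∈ Finset.Icc 2 a) ∨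
      (x.1 = false ∧ x.2.1 = b ∧ x.2.2 ∈ Finset.Icc 2 b) := by
  obtain ⟨u, v, w⟩ := x
  simp [pairIdx, Prod.ext_iff, eq_comm, and_comm, and_left_comm]
  aesop

lemma card_singleIdx {a : ℕ} (ha : 2 ≤ a) : (singleIdx a).card = a := by
  rw [singleIdx, Finset.card_insert_of_notMem (by simp), Finset.card_image_of_injective _
    (fun i j h => by simpa using h), Nat.card_Icc]
  omega

lemma card_pairIdx {a b : ℕ} (ha : 2 ≤ a) (hb : 2 ≤ b) (hab : a ≠ b) :
    (pairIdx a b).card = a + b := by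
  have h1 : ((Finset.Icc 2 a).image fun i => (false, a, i)) ∩
      ((Finset.Icc 2 b).image fun i => (false, b, i)) = ∅ := by
    rw [Finset.eq_empty_iff_forall_notMem]
    rintro ⟨u, v, w⟩ hx
    simp only [Finset.mem_inter, Finset.mem_image, Prod.ext_iff] at hx
    obtain ⟨⟨i, _, hi⟩, ⟨j, _, hj⟩⟩ := hx
    exact hab (hi.2.1.trans hj.2.1.symm)
  rw [pairIdx, Finset.card_insert_of_notMem (by simp [hab, Ne.symm hab]),
    Finset.card_insert_of_notMem (by simp [hab, Ne.symm hab]),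
    Finset.card_union_of_disjoint (Finset.disjoint_iff_inter_eq_empty.mpr h1),
    Finset.card_image_of_injective _ (fun i j h => by simpa using h),
    Finset.card_image_of_injective _ (fun i j h => by simpa using h),
    Nat.card_Icc, Nat.card_Icc]
  omega

lemma mem_tff {a : ℕ} (h : a ∈ threeFourFive) : a = 3 ∨ a = 4 ∨ a = 5 := by
  simpa [threeFourFive] using h

lemma tff_two {a : ℕ} (h : a ∈ threeFourFive) : 2 ≤ a := by
  rcases mem_tff h with rfl | rfl | rfl <;> omega

lemma sum_tff (g : ℕ → ℕ) : ∑ b ∈ threeFourFive, g b = g 3 + g 4 + g 5 := by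
  show ∑ b ∈ ({3, 4, 5} : Finset ℕ), g b = _
  rw [Finset.sum_insert (by decide), Finset.sum_insert (by decide), Finset.sum_singleton]
  ring

lemma decompose (Xab Xi : ℕ → ℕ → Finset V)
    (hcds : ∀ x y, ValidIdx x → ValidIdx y → x ≠ y →
      Disjoint (classSet Xab Xi x) (classSet Xab Xi y)) :
    ∀ n (E : Finset (Sym2 V)), E.card ≤ n →
      (∀ e ∈ E, ∃ j, ValidIdx j ∧ e ∈ (classSet Xab Xi j).sym2) →
      (∀ a ∈ threeFourFive, ∀ i ∈ Finset.Icc 2 a,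
        (E.filter (· ∈ (Xi a i).sym2)).card
          = ∑ b ∈ threeFourFive, (E.filter (· ∈ (Xab a b).sym2)).card) →
      (∀ a ∈ threeFourFive, ∀ b ∈ threeFourFive,
        (E.filter (· ∈ (Xab a b).sym2)).card = (E.filter (· ∈ (Xab b a).sym2)).card) →
      ∃ 𝒜 : Finset (Finset (Sym2 V)),
        (∀ O ∈ 𝒜, IsAtomOf Xab Xi O) ∧
        (∀ O ∈ 𝒜, ∀ O' ∈ 𝒜, O ≠ O' → Disjoint O O') ∧
        E = 𝒜.biUnion id := by
  intro n
  induction n with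
  | zero =>
    intro E hcard _ _ _
    have hE : E = ∅ := Finset.card_eq_zero.mp (Nat.le_zero.mp hcard)
    exact ⟨∅, by simp, by simp, by simp [hE]⟩
  | succ n ih =>
    intro E hcard hinE hk hm
    by_cases hz : ∀ a ∈ threeFourFive, ∀ b ∈ threeFourFive,
        (E.filter (· ∈ (Xab a b).sym2)).card = 0
    · have hE : E = ∅ := by
        rw [Finset.eq_empty_iff_forall_notMem]
        intro e he
        obtain ⟨j, hvj, hej⟩ := hinE e he
        obtain ⟨(_ | _), u, v⟩ := j
        · have h1 := hk u hvj.1 v hvj.2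
          have h2 : ∑ b ∈ threeFourFive, (E.filter (· ∈ (Xab u b).sym2)).card = 0 :=
            Finset.sum_eq_zero fun b hb => hz u hvj.1 b hb
          have h3 : e ∈ E.filter (· ∈ (Xi u v).sym2) := Finset.mem_filter.mpr ⟨he, hej⟩
          rw [h2] at h1
          rw [Finset.card_eq_zero.mp h1] at h3
          exact absurd h3 (Finset.notMem_empty e)
        · have h3 : e ∈ E.filter (· ∈ (Xab u v).sym2) := Finset.mem_filter.mpr ⟨he, hej⟩
          rw [Finset.card_eq_zero.mp (hz u hvj.1 v hvj.2)] at h3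
          exact absurd h3 (Finset.notMem_empty e)
      exact ⟨∅, by simp, by simp, by simp [hE]⟩
    · push_neg at hz
      obtain ⟨a, ha, b, hb, hab⟩ := hz
      have hab1 : 1 ≤ (E.filter (· ∈ (Xab a b).sym2)).card := Nat.one_le_iff_ne_zero.mpr hab
      have hba1 : 1 ≤ (E.filter (· ∈ (Xab b a).sym2)).card := by
        rw [← hm a ha b hb]; exact hab1
      have ha2 : 2 ≤ a := tff_two ha
      have hb2 : 2 ≤ b := tff_two hb
      have hrow : ∀ u ∈ threeFourFive, ∀ w ∈ threeFourFive,
          1 ≤ (E.filter (· ∈ (Xab u w).sym2)).card →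
          ∀ i ∈ Finset.Icc 2 u, 1 ≤ (E.filter (· ∈ (Xi u i).sym2)).card := by
        intro u hu w hw h1 i hi
        rw [hk u hu i hi]
        exact le_trans h1 (Finset.single_le_sum (f := fun w =>
          (E.filter (· ∈ (Xab u w).sym2)).card) (fun _ _ => Nat.zero_le _) hw)
      by_cases hde : a = b
      -- ===================== SINGLE CASE =====================
      · subst hde
        set I := singleIdx a with hI
        have hmemT : ∀ u w, ((true, u, w) ∈ I) ↔ (u = a ∧ w = a) := by
          intro u w
          rw [hI, mem_singleIdx]
          simp [Prod.ext_iff]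
        have hmemF : ∀ u w, ((false, u, w) ∈ I) ↔ (u = a ∧ w ∈ Finset.Icc 2 a) := by
          intro u w
          rw [hI, mem_singleIdx]
          simp [Prod.ext_iff]
        have hIv : ∀ j ∈ I, ValidIdx j := by
          rintro ⟨(_ | _), u, w⟩ hj
          · rw [hmemF] at hj
            exact ⟨hj.1 ▸ ha, hj.1 ▸ hj.2⟩
          · rw [hmemT] at hj
            exact ⟨hj.1 ▸ ha, hj.2 ▸ ha⟩
        have hne : ∀ j ∈ I, (E.filter (· ∈ (classSet Xab Xi j).sym2)).Nonempty := by
          rintro ⟨(_ | _), u, w⟩ hj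
          · rw [hmemF] at hj
            obtain ⟨rfl, hw⟩ := hj
            exact Finset.card_pos.mp (hrow u ha u ha hab1 w hw)
          · rw [hmemT] at hj
            obtain ⟨rfl, rfl⟩ := hj
            exact Finset.card_pos.mp hab1
        obtain ⟨O, hsub, hOcard, hone, hcN, hcI⟩ := step Xab Xi hcds E I hIv hne
        have hOa : O.card = a := hOcard.trans (card_singleIdx ha2)
        -- specialized count lemmas
        have cTI : ∀ u w, (true, u, w) ∈ I →
            ((E \ O).filter (· ∈ (Xab u w).sym2)).card
              = (E.filter (· ∈ (Xab u w).sym2)).card - 1 :=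
          fun u w h => hcI (true, u, w) h
        have cTN : ∀ u w, ValidIdx (true, u, w) → (true, u, w) ∉ I →
            ((E \ O).filter (· ∈ (Xab u w).sym2)).card
              = (E.filter (· ∈ (Xab u w).sym2)).card :=
          fun u w hv h => hcN (true, u, w) hv h
        have cFI : ∀ u w, (false, u, w) ∈ I →
            ((E \ O).filter (· ∈ (Xi u w).sym2)).card
              = (E.filter (· ∈ (Xi u w).sym2)).card - 1 :=
          fun u w h => hcI (false, u, w) h
        have cFN : ∀ u w, ValidIdx (false, u, w) → (false, u, w) ∉ I →
            ((E \ O).filter (· ∈ (Xi u w).sym2)).card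
              = (E.filter (· ∈ (Xi u w).sym2)).card :=
          fun u w hv h => hcN (false, u, w) hv h
        -- the atom
        have hatom : IsAtomOf Xab Xi O := by
          left
          refine ⟨a, ha, hOa, ?_, ?_⟩
          · exact hone (true, a, a) ((hmemT a a).mpr ⟨rfl, rfl⟩)
          · exact fun i hi => hone (false, a, i) ((hmemF a i).mpr ⟨rfl, hi⟩)
        -- recursion
        have hcard' : (E \ O).card ≤ n := by
          rw [Finset.card_sdiff_of_subset hsub, hOa]
          omega
        have hinE' : ∀ e ∈ E \ O, ∃ j, ValidIdx j ∧ e ∈ (classSet Xab Xi j).sym2 :=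
          fun e he => hinE e (Finset.sdiff_subset he)
        have hk' : ∀ u ∈ threeFourFive, ∀ i ∈ Finset.Icc 2 u,
            ((E \ O).filter (· ∈ (Xi u i).sym2)).card
              = ∑ w ∈ threeFourFive, ((E \ O).filter (· ∈ (Xab u w).sym2)).card := by
          intro u hu i hi
          have hk0 := hk u hu i hi
          by_cases huv : u = a
          · subst huv
            have h1 := cFI u i ((hmemF u i).mpr ⟨rfl, hi⟩)
            have hrest : ∑ w ∈ threeFourFive.erase u,
                ((E \ O).filter (· ∈ (Xab u w).sym2)).card
                = ∑ w ∈ threeFourFive.erase u, (E.filter (· ∈ (Xab u w).sym2)).card := by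
              apply Finset.sum_congr rfl
              intro w hw
              exact cTN u w ⟨hu, (Finset.mem_erase.mp hw).2⟩
                (fun h => (Finset.mem_erase.mp hw).1 ((hmemT u w).mp h).2)
            have hdiag := cTI u u ((hmemT u u).mpr ⟨rfl, rfl⟩)
            rw [← Finset.sum_erase_add _ _ hu] at hk0 ⊢
            rw [h1, hrest, hdiag, hk0]
            omega
          · have h1 := cFN u i ⟨hu, hi⟩ (fun h => huv ((hmemF u i).mp h).1)
            have hrest : ∑ w ∈ threeFourFive,
                ((E \ O).filter (· ∈ (Xab u w).sym2)).card
                = ∑ w ∈ threeFourFive, (E.filter (· ∈ (Xab u w).sym2)).card := by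
              apply Finset.sum_congr rfl
              intro w hw
              exact cTN u w ⟨hu, hw⟩ (fun h => huv ((hmemT u w).mp h).1)
            rw [h1, hrest, hk0]
        have hm' : ∀ u ∈ threeFourFive, ∀ w ∈ threeFourFive,
            ((E \ O).filter (· ∈ (Xab u w).sym2)).card
              = ((E \ O).filter (· ∈ (Xab w u).sym2)).card := by
          intro u hu w hw
          by_cases h : u = a ∧ w = a
          · obtain ⟨rfl, rfl⟩ := h
            rfl
          · have h1 := cTN u w ⟨hu, hw⟩ (fun hmem => h ((hmemT u w).mp hmem))
            have h2 := cTN w u ⟨hw, hu⟩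
              (fun hmem => h (And.symm ((hmemT w u).mp hmem)))
            rw [h1, h2, hm u hu w hw]
        obtain ⟨𝒜', hA1, hA2, hA3⟩ := ih (E \ O) hcard' hinE' hk' hm'
        refine ⟨insert O 𝒜', ?_, ?_, ?_⟩
        · intro P hP
          rcases Finset.mem_insert.mp hP with rfl | hP
          · exact hatom
          · exact hA1 P hP
        · have hdis : ∀ Q ∈ 𝒜', Disjoint O Q := by
            intro Q hQ
            have hQE : Q ⊆ E \ O := hA3 ▸ Finset.subset_biUnion_of_mem id hQ
            exact Finset.disjoint_left.mpr
              (fun e heO heQ => (Finset.mem_sdiff.mp (hQE heQ)).2 heO)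
          intro P hP Q hQ hPQ
          rcases Finset.mem_insert.mp hP with h1 | h1
          · rcases Finset.mem_insert.mp hQ with h2 | h2
            · exact absurd (h1.trans h2.symm) hPQ
            · exact h1 ▸ hdis Q h2
          · rcases Finset.mem_insert.mp hQ with h2 | h2
            · exact h2 ▸ (hdis P h1).symm
            · exact hA2 P h1 Q h2 hPQ
        · rw [Finset.biUnion_insert, ← hA3, id]
          exact (Finset.union_sdiff_of_subset hsub).symm
      -- ===================== PAIR CASE =====================
      · set I := pairIdx a b with hI
        have hmemT : ∀ u w, ((true, u, w) ∈ I) ↔ ((u = a ∧ w = b) ∨ (u = b ∧ w = a)) := by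
          intro u w
          rw [hI, mem_pairIdx]
          simp [Prod.ext_iff]
        have hmemF : ∀ u w, ((false, u, w) ∈ I) ↔
            ((u = a ∧ w ∈ Finset.Icc 2 a) ∨ (u = b ∧ w ∈ Finset.Icc 2 b)) := by
          intro u w
          rw [hI, mem_pairIdx]
          simp [Prod.ext_iff]
        have hIv : ∀ j ∈ I, ValidIdx j := by
          rintro ⟨(_ | _), u, w⟩ hj
          · rw [hmemF] at hj
            rcases hj with ⟨rfl, hw⟩ | ⟨rfl, hw⟩
            · exact ⟨ha, hw⟩
            · exact ⟨hb, hw⟩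
          · rw [hmemT] at hj
            rcases hj with ⟨rfl, rfl⟩ | ⟨rfl, rfl⟩
            · exact ⟨ha, hb⟩
            · exact ⟨hb, ha⟩
        have hne : ∀ j ∈ I, (E.filter (· ∈ (classSet Xab Xi j).sym2)).Nonempty := by
          rintro ⟨(_ | _), u, w⟩ hj
          · rw [hmemF] at hj
            rcases hj with ⟨rfl, hw⟩ | ⟨rfl, hw⟩
            · exact Finset.card_pos.mp (hrow u ha b hb hab1 w hw)
            · exact Finset.card_pos.mp (hrow u hb a ha hba1 w hw)
          · rw [hmemT] at hj
            rcases hj with ⟨rfl, rfl⟩ | ⟨rfl, rfl⟩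
            · exact Finset.card_pos.mp hab1
            · exact Finset.card_pos.mp hba1
        obtain ⟨O, hsub, hOcard, hone, hcN, hcI⟩ := step Xab Xi hcds E I hIv hne
        have hOa : O.card = a + b := hOcard.trans (card_pairIdx ha2 hb2 hde)
        have cTI : ∀ u w, (true, u, w) ∈ I →
            ((E \ O).filter (· ∈ (Xab u w).sym2)).card
              = (E.filter (· ∈ (Xab u w).sym2)).card - 1 :=
          fun u w h => hcI (true, u, w) h
        have cTN : ∀ u w, ValidIdx (true, u, w) → (true, u, w) ∉ I →
            ((E \ O).filter (· ∈ (Xab u w).sym2)).card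
              = (E.filter (· ∈ (Xab u w).sym2)).card :=
          fun u w hv h => hcN (true, u, w) hv h
        have cFI : ∀ u w, (false, u, w) ∈ I →
            ((E \ O).filter (· ∈ (Xi u w).sym2)).card
              = (E.filter (· ∈ (Xi u w).sym2)).card - 1 :=
          fun u w h => hcI (false, u, w) h
        have cFN : ∀ u w, ValidIdx (false, u, w) → (false, u, w) ∉ I →
            ((E \ O).filter (· ∈ (Xi u w).sym2)).card
              = (E.filter (· ∈ (Xi u w).sym2)).card :=
          fun u w hv h => hcN (false, u, w) hv h
        have hatom : IsAtomOf Xab Xi O := by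
          right
          refine ⟨a, ha, b, hb, hde, hOa, ?_, ?_, ?_, ?_⟩
          · exact hone (true, a, b) ((hmemT a b).mpr (Or.inl ⟨rfl, rfl⟩))
          · exact hone (true, b, a) ((hmemT b a).mpr (Or.inr ⟨rfl, rfl⟩))
          · exact fun i hi => hone (false, a, i) ((hmemF a i).mpr (Or.inl ⟨rfl, hi⟩))
          · exact fun i hi => hone (false, b, i) ((hmemF b i).mpr (Or.inr ⟨rfl, hi⟩))
        have hcard' : (E \ O).card ≤ n := by
          rw [Finset.card_sdiff_of_subset hsub, hOa]
          omega
        have hinE' : ∀ e ∈ E \ O, ∃ j, ValidIdx j ∧ e ∈ (classSet Xab Xi j).sym2 :=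
          fun e he => hinE e (Finset.sdiff_subset he)
        have hk' : ∀ u ∈ threeFourFive, ∀ i ∈ Finset.Icc 2 u,
            ((E \ O).filter (· ∈ (Xi u i).sym2)).card
              = ∑ w ∈ threeFourFive, ((E \ O).filter (· ∈ (Xab u w).sym2)).card := by
          intro u hu i hi
          have hk0 := hk u hu i hi
          by_cases hua : u = a
          · subst hua
            have h1 := cFI u i ((hmemF u i).mpr (Or.inl ⟨rfl, hi⟩))
            have hrest : ∑ w ∈ threeFourFive.erase b,
                ((E \ O).filter (· ∈ (Xab u w).sym2)).card
                = ∑ w ∈ threeFourFive.erase b, (E.filter (· ∈ (Xab u w).sym2)).card := by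
              apply Finset.sum_congr rfl
              intro w hw
              refine cTN u w ⟨hu, (Finset.mem_erase.mp hw).2⟩ ?_
              intro hmem
              rcases (hmemT u w).mp hmem with ⟨_, h'⟩ | ⟨h', _⟩
              · exact (Finset.mem_erase.mp hw).1 h'
              · exact hde h'
            have hspec := cTI u b ((hmemT u b).mpr (Or.inl ⟨rfl, rfl⟩))
            rw [← Finset.sum_erase_add _ _ hb] at hk0 ⊢
            rw [h1, hrest, hspec, hk0]
            omega
          by_cases hub : u = b
          · subst hub
            have h1 := cFI u i ((hmemF u i).mpr (Or.inr ⟨rfl, hi⟩))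
            have hrest : ∑ w ∈ threeFourFive.erase a,
                ((E \ O).filter (· ∈ (Xab u w).sym2)).card
                = ∑ w ∈ threeFourFive.erase a, (E.filter (· ∈ (Xab u w).sym2)).card := by
              apply Finset.sum_congr rfl
              intro w hw
              refine cTN u w ⟨hu, (Finset.mem_erase.mp hw).2⟩ ?_
              intro hmem
              rcases (hmemT u w).mp hmem with ⟨h', _⟩ | ⟨_, h'⟩
              · exact hde h'.symm
              · exact (Finset.mem_erase.mp hw).1 h'
            have hspec := cTI u a ((hmemT u a).mpr (Or.inr ⟨rfl, rfl⟩))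
            rw [← Finset.sum_erase_add _ _ ha] at hk0 ⊢
            rw [h1, hrest, hspec, hk0]
            omega
          · have h1 : ((E \ O).filter (· ∈ (Xi u i).sym2)).card
                = (E.filter (· ∈ (Xi u i).sym2)).card := by
              refine cFN u i ⟨hu, hi⟩ ?_
              intro hmem
              rcases (hmemF u i).mp hmem with ⟨h', _⟩ | ⟨h', _⟩
              · exact hua h'
              · exact hub h'
            have hrest : ∑ w ∈ threeFourFive,
                ((E \ O).filter (· ∈ (Xab u w).sym2)).card
                = ∑ w ∈ threeFourFive, (E.filter (· ∈ (Xab u w).sym2)).card := by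
              apply Finset.sum_congr rfl
              intro w hw
              refine cTN u w ⟨hu, hw⟩ ?_
              intro hmem
              rcases (hmemT u w).mp hmem with ⟨h', _⟩ | ⟨h', _⟩
              · exact hua h'
              · exact hub h'
            rw [h1, hrest, hk0]
        have hm' : ∀ u ∈ threeFourFive, ∀ w ∈ threeFourFive,
            ((E \ O).filter (· ∈ (Xab u w).sym2)).card
              = ((E \ O).filter (· ∈ (Xab w u).sym2)).card := by
          intro u hu w hw
          by_cases h1 : u = a ∧ w = b
          · obtain ⟨rfl, rfl⟩ := h1
            rw [cTI u w ((hmemT u w).mpr (Or.inl ⟨rfl, rfl⟩)),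
              cTI w u ((hmemT w u).mpr (Or.inr ⟨rfl, rfl⟩)), hm u hu w hw]
          by_cases h2 : u = b ∧ w = a
          · obtain ⟨rfl, rfl⟩ := h2
            rw [cTI u w ((hmemT u w).mpr (Or.inr ⟨rfl, rfl⟩)),
              cTI w u ((hmemT w u).mpr (Or.inl ⟨rfl, rfl⟩)), hm u hu w hw]
          · have n1 : (true, u, w) ∉ I := by
              intro hmem
              rcases (hmemT u w).mp hmem with h | h
              · exact h1 h
              · exact h2 h
            have n2 : (true, w, u) ∉ I := by
              intro hmem
              rcases (hmemT w u).mp hmem with ⟨x1, x2⟩ | ⟨x1, x2⟩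
              · exact h2 ⟨x2, x1⟩
              · exact h1 ⟨x2, x1⟩
            rw [cTN u w ⟨hu, hw⟩ n1, cTN w u ⟨hw, hu⟩ n2, hm u hu w hw]
        obtain ⟨𝒜', hA1, hA2, hA3⟩ := ih (E \ O) hcard' hinE' hk' hm'
        refine ⟨insert O 𝒜', ?_, ?_, ?_⟩
        · intro P hP
          rcases Finset.mem_insert.mp hP with rfl | hP
          · exact hatom
          · exact hA1 P hP
        · have hdis : ∀ Q ∈ 𝒜', Disjoint O Q := by
            intro Q hQ
            have hQE : Q ⊆ E \ O := hA3 ▸ Finset.subset_biUnion_of_mem id hQ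
            exact Finset.disjoint_left.mpr
              (fun e heO heQ => (Finset.mem_sdiff.mp (hQE heQ)).2 heO)
          intro P hP Q hQ hPQ
          rcases Finset.mem_insert.mp hP with h1 | h1
          · rcases Finset.mem_insert.mp hQ with h2 | h2
            · exact absurd (h1.trans h2.symm) hPQ
            · exact h1 ▸ hdis Q h2
          · rcases Finset.mem_insert.mp hQ with h2 | h2
            · exact h2 ▸ (hdis P h1).symm
            · exact hA2 P h1 Q h2 hPQ
        · rw [Finset.biUnion_insert, ← hA3, id]
          exact (Finset.union_sdiff_of_subset hsub).symm
lemma mem_singleIdx_T {c u w : ℕ} : ((true, u, w) ∈ singleIdx c) ↔ (u = c ∧ w = c) := by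
  rw [mem_singleIdx]; simp [Prod.ext_iff]

lemma mem_singleIdx_F {c u w : ℕ} :
    ((false, u, w) ∈ singleIdx c) ↔ (u = c ∧ w ∈ Finset.Icc 2 c) := by
  rw [mem_singleIdx]; simp [Prod.ext_iff]

lemma mem_pairIdx_T {c d u w : ℕ} :
    ((true, u, w) ∈ pairIdx c d) ↔ ((u = c ∧ w = d) ∨ (u = d ∧ w = c)) := by
  rw [mem_pairIdx]; simp [Prod.ext_iff]

lemma mem_pairIdx_F {c d u w : ℕ} :
    ((false, u, w) ∈ pairIdx c d) ↔
      ((u = c ∧ w ∈ Finset.Icc 2 c) ∨ (u = d ∧ w ∈ Finset.Icc 2 d)) := by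
  rw [mem_pairIdx]; simp [Prod.ext_iff]

lemma atom_count (Xab Xi : ℕ → ℕ → Finset V)
    (hcds : ∀ x y, ValidIdx x → ValidIdx y → x ≠ y →
      Disjoint (classSet Xab Xi x) (classSet Xab Xi y))
    {O : Finset (Sym2 V)} {I : Finset (Bool × ℕ × ℕ)}
    (hIv : ∀ j ∈ I, ValidIdx j)
    (hone : ∀ j ∈ I, (O.filter (· ∈ (classSet Xab Xi j).sym2)).card = 1)
    (hsum : I.card = O.card)
    {j : Bool × ℕ × ℕ} (hvj : ValidIdx j) (hj : j ∉ I) :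
    (O.filter (· ∈ (classSet Xab Xi j).sym2)).card = 0 := by
  have hs : ∑ i ∈ I, (O.filter (· ∈ (classSet Xab Xi i).sym2)).card = O.card := by
    rw [Finset.sum_congr rfl hone, Finset.sum_const, smul_eq_mul, mul_one, hsum]
  have h0 := zero_lemma O I (classSet Xab Xi)
    (fun i hi j' hj' hij => hcds i j' (hIv i hi) (hIv j' hj') hij) hs
    (classSet Xab Xi j)
    (fun i hi => hcds i j (hIv i hi) hvj (fun h => hj (h ▸ hi)))
  rw [h0, Finset.card_empty]

lemma single_count (Xab Xi : ℕ → ℕ → Finset V)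
    (hcds : ∀ x y, ValidIdx x → ValidIdx y → x ≠ y →
      Disjoint (classSet Xab Xi x) (classSet Xab Xi y))
    {O : Finset (Sym2 V)} {c : ℕ} (hc : c ∈ threeFourFive)
    (hA : IsSingleAtom Xab Xi c O) :
    ∀ j, ValidIdx j →
      (O.filter (· ∈ (classSet Xab Xi j).sym2)).card
        = if j ∈ singleIdx c then 1 else 0 := by
  have hIv : ∀ j ∈ singleIdx c, ValidIdx j := by
    rintro ⟨(_ | _), u, w⟩ hj
    · rw [mem_singleIdx_F] at hj
      exact ⟨hj.1 ▸ hc, hj.1 ▸ hj.2⟩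
    · rw [mem_singleIdx_T] at hj
      exact ⟨hj.1 ▸ hc, hj.2 ▸ hc⟩
  have hone : ∀ j ∈ singleIdx c, (O.filter (· ∈ (classSet Xab Xi j).sym2)).card = 1 := by
    rintro ⟨(_ | _), u, w⟩ hj
    · rw [mem_singleIdx_F] at hj
      obtain ⟨rfl, hw⟩ := hj
      exact hA.2.2 w hw
    · rw [mem_singleIdx_T] at hj
      obtain ⟨rfl, rfl⟩ := hj
      exact hA.2.1
  intro j hvj
  by_cases hj : j ∈ singleIdx c
  · rw [if_pos hj]; exact hone j hj
  · rw [if_neg hj]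
    exact atom_count Xab Xi hcds hIv hone
      ((card_singleIdx (tff_two hc)).trans hA.1.symm) hvj hj

lemma pair_count (Xab Xi : ℕ → ℕ → Finset V)
    (hcds : ∀ x y, ValidIdx x → ValidIdx y → x ≠ y →
      Disjoint (classSet Xab Xi x) (classSet Xab Xi y))
    {O : Finset (Sym2 V)} {c d : ℕ} (hc : c ∈ threeFourFive) (hd : d ∈ threeFourFive)
    (hcd : c ≠ d) (hA : IsPairAtom Xab Xi c d O) :
    ∀ j, ValidIdx j →
      (O.filter (· ∈ (classSet Xab Xi j).sym2)).card
        = if j ∈ pairIdx c d then 1 else 0 := by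
  have hIv : ∀ j ∈ pairIdx c d, ValidIdx j := by
    rintro ⟨(_ | _), u, w⟩ hj
    · rw [mem_pairIdx_F] at hj
      rcases hj with ⟨rfl, hw⟩ | ⟨rfl, hw⟩
      · exact ⟨hc, hw⟩
      · exact ⟨hd, hw⟩
    · rw [mem_pairIdx_T] at hj
      rcases hj with ⟨rfl, rfl⟩ | ⟨rfl, rfl⟩
      · exact ⟨hc, hd⟩
      · exact ⟨hd, hc⟩
  have hone : ∀ j ∈ pairIdx c d, (O.filter (· ∈ (classSet Xab Xi j).sym2)).card = 1 := by
    rintro ⟨(_ | _), u, w⟩ hj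
    · rw [mem_pairIdx_F] at hj
      rcases hj with ⟨rfl, hw⟩ | ⟨rfl, hw⟩
      · exact hA.2.2.2.1 w hw
      · exact hA.2.2.2.2 w hw
    · rw [mem_pairIdx_T] at hj
      rcases hj with ⟨rfl, rfl⟩ | ⟨rfl, rfl⟩
      · exact hA.2.1
      · exact hA.2.2.1
  intro j hvj
  by_cases hj : j ∈ pairIdx c d
  · rw [if_pos hj]; exact hone j hj
  · rw [if_neg hj]
    exact atom_count Xab Xi hcds hIv hone
      ((card_pairIdx (tff_two hc) (tff_two hd) hcd).trans hA.1.symm) hvj hj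

lemma atom_row (Xab Xi : ℕ → ℕ → Finset V)
    (hcds : ∀ x y, ValidIdx x → ValidIdx y → x ≠ y →
      Disjoint (classSet Xab Xi x) (classSet Xab Xi y))
    {O : Finset (Sym2 V)} (hA : IsAtomOf Xab Xi O)
    {u : ℕ} (hu : u ∈ threeFourFive) {i : ℕ} (hi : i ∈ Finset.Icc 2 u) :
    ∑ w ∈ threeFourFive, (O.filter (· ∈ (Xab u w).sym2)).card
      = (O.filter (· ∈ (Xi u i).sym2)).card := by
  rcases hA with ⟨c, hc, hS⟩ | ⟨c, hc, d, hd, hcd, hP⟩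
  · have cnt := single_count Xab Xi hcds hc hS
    have cntT : ∀ u w, ValidIdx (true, u, w) → (O.filter (· ∈ (Xab u w).sym2)).card
        = if (true, u, w) ∈ singleIdx c then 1 else 0 := fun u w hv => cnt (true, u, w) hv
    have cntF : ∀ u w, ValidIdx (false, u, w) → (O.filter (· ∈ (Xi u w).sym2)).card
        = if (false, u, w) ∈ singleIdx c then 1 else 0 := fun u w hv => cnt (false, u, w) hv
    have cT : ∀ w, w ∈ threeFourFive → (O.filter (· ∈ (Xab u w).sym2)).card
        = if (u = c ∧ w = c) then 1 else 0 := by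
      intro w hw
      rw [cntT u w ⟨hu, hw⟩]
      simp only [mem_singleIdx_T]
    have cF : (O.filter (· ∈ (Xi u i).sym2)).card = if u = c then 1 else 0 := by
      rw [cntF u i ⟨hu, hi⟩]
      by_cases h : u = c
      · subst h
        rw [if_pos (mem_singleIdx_F.mpr ⟨rfl, hi⟩), if_pos rfl]
      · rw [if_neg (fun hm => h (mem_singleIdx_F.mp hm).1), if_neg h]
    rw [cF]
    by_cases h : u = c
    · subst h
      rw [if_pos rfl, ← Finset.sum_erase_add _ _ hc]
      rw [Finset.sum_eq_zero, cT u hu, if_pos ⟨rfl, rfl⟩]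
      · intro w hw
        rw [cT w (Finset.mem_of_mem_erase hw),
          if_neg (fun hh => (Finset.mem_erase.mp hw).1 hh.2)]
    · rw [if_neg h, Finset.sum_eq_zero]
      intro w hw
      rw [cT w hw, if_neg (fun hh => h hh.1)]
  · have cnt := pair_count Xab Xi hcds hc hd hcd hP
    have cntT : ∀ u w, ValidIdx (true, u, w) → (O.filter (· ∈ (Xab u w).sym2)).card
        = if (true, u, w) ∈ pairIdx c d then 1 else 0 := fun u w hv => cnt (true, u, w) hv
    have cntF : ∀ u w, ValidIdx (false, u, w) → (O.filter (· ∈ (Xi u w).sym2)).card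
        = if (false, u, w) ∈ pairIdx c d then 1 else 0 := fun u w hv => cnt (false, u, w) hv
    have cT : ∀ w, w ∈ threeFourFive → (O.filter (· ∈ (Xab u w).sym2)).card
        = if ((u = c ∧ w = d) ∨ (u = d ∧ w = c)) then 1 else 0 := by
      intro w hw
      rw [cntT u w ⟨hu, hw⟩]
      simp only [mem_pairIdx_T]
    have cF : (O.filter (· ∈ (Xi u i).sym2)).card = if (u = c ∨ u = d) then 1 else 0 := by
      rw [cntF u i ⟨hu, hi⟩]
      by_cases h : u = c
      · subst h
        rw [if_pos (mem_pairIdx_F.mpr (Or.inl ⟨rfl, hi⟩)), if_pos (Or.inl rfl)]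
      · by_cases h' : u = d
        · subst h'
          rw [if_pos (mem_pairIdx_F.mpr (Or.inr ⟨rfl, hi⟩)), if_pos (Or.inr rfl)]
        · rw [if_neg, if_neg (by tauto)]
          intro hm
          rcases mem_pairIdx_F.mp hm with ⟨h1, _⟩ | ⟨h1, _⟩
          · exact h h1
          · exact h' h1
    rw [cF]
    by_cases h : u = c
    · subst h
      rw [if_pos (Or.inl rfl), ← Finset.sum_erase_add _ _ hd]
      rw [Finset.sum_eq_zero, cT d hd, if_pos (Or.inl ⟨rfl, rfl⟩)]
      · intro w hw
        rw [cT w (Finset.mem_of_mem_erase hw), if_neg]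
        rintro (⟨_, h2⟩ | ⟨h2, _⟩)
        · exact (Finset.mem_erase.mp hw).1 h2
        · exact hcd h2
    · by_cases h' : u = d
      · subst h'
        rw [if_pos (Or.inr rfl), ← Finset.sum_erase_add _ _ hc]
        rw [Finset.sum_eq_zero, cT c hc, if_pos (Or.inr ⟨rfl, rfl⟩)]
        · intro w hw
          rw [cT w (Finset.mem_of_mem_erase hw), if_neg]
          rintro (⟨h2, _⟩ | ⟨_, h2⟩)
          · exact hcd h2.symm
          · exact (Finset.mem_erase.mp hw).1 h2
      · rw [if_neg (by tauto), Finset.sum_eq_zero]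
        intro w hw
        rw [cT w hw, if_neg]
        rintro (⟨h2, _⟩ | ⟨h2, _⟩)
        · exact h h2
        · exact h' h2

lemma atom_sym (Xab Xi : ℕ → ℕ → Finset V)
    (hcds : ∀ x y, ValidIdx x → ValidIdx y → x ≠ y →
      Disjoint (classSet Xab Xi x) (classSet Xab Xi y))
    {O : Finset (Sym2 V)} (hA : IsAtomOf Xab Xi O)
    {u w : ℕ} (hu : u ∈ threeFourFive) (hw : w ∈ threeFourFive) :
    (O.filter (· ∈ (Xab u w).sym2)).card = (O.filter (· ∈ (Xab w u).sym2)).card := by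
  rcases hA with ⟨c, hc, hS⟩ | ⟨c, hc, d, hd, hcd, hP⟩
  · have cnt := single_count Xab Xi hcds hc hS
    have cntT : ∀ u w, ValidIdx (true, u, w) → (O.filter (· ∈ (Xab u w).sym2)).card
        = if (true, u, w) ∈ singleIdx c then 1 else 0 := fun u w hv => cnt (true, u, w) hv
    have cntF : ∀ u w, ValidIdx (false, u, w) → (O.filter (· ∈ (Xi u w).sym2)).card
        = if (false, u, w) ∈ singleIdx c then 1 else 0 := fun u w hv => cnt (false, u, w) hv
    rw [cntT u w ⟨hu, hw⟩, cntT w u ⟨hw, hu⟩]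
    simp only [mem_singleIdx_T]
    by_cases h : u = c ∧ w = c
    · rw [if_pos h, if_pos ⟨h.2, h.1⟩]
    · rw [if_neg h, if_neg (fun hh => h ⟨hh.2, hh.1⟩)]
  · have cnt := pair_count Xab Xi hcds hc hd hcd hP
    have cntT : ∀ u w, ValidIdx (true, u, w) → (O.filter (· ∈ (Xab u w).sym2)).card
        = if (true, u, w) ∈ pairIdx c d then 1 else 0 := fun u w hv => cnt (true, u, w) hv
    have cntF : ∀ u w, ValidIdx (false, u, w) → (O.filter (· ∈ (Xi u w).sym2)).card
        = if (false, u, w) ∈ pairIdx c d then 1 else 0 := fun u w hv => cnt (false, u, w) hv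
    rw [cntT u w ⟨hu, hw⟩, cntT w u ⟨hw, hu⟩]
    simp only [mem_pairIdx_T]
    by_cases h : (u = c ∧ w = d) ∨ (u = d ∧ w = c)
    · rw [if_pos h, if_pos (by tauto)]
    · rw [if_neg h, if_neg (by tauto)]

/-- Fact 4.8: a graph `H` whose edges all lie inside the classes of an `F`-partition is
an edge-disjoint union of atoms iff `e_H(X^a_1) = ⋯ = e_H(X^a_a)` for all `a ∈ {3,4,5}`
and `e_H(X^{a,b}_1) = e_H(X^{b,a}_1)` for all `a,b ∈ {3,4,5}`. -/
theorem stmt_6 (H : SimpleGraph V) [DecidableRel H.Adj]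
    (Xab : ℕ → ℕ → Finset V) (Xi : ℕ → ℕ → Finset V)
    -- the classes are pairwise disjoint
    (hdisj1 : ∀ a ∈ threeFourFive, ∀ b ∈ threeFourFive, ∀ a' ∈ threeFourFive,
      ∀ b' ∈ threeFourFive, (a, b) ≠ (a', b') → Disjoint (Xab a b) (Xab a' b'))
    (hdisj2 : ∀ a ∈ threeFourFive, ∀ i ∈ Finset.Icc 2 a, ∀ a' ∈ threeFourFive,
      ∀ i' ∈ Finset.Icc 2 a', (a, i) ≠ (a', i') → Disjoint (Xi a i) (Xi a' i'))
    (hdisj3 : ∀ a ∈ threeFourFive, ∀ b ∈ threeFourFive, ∀ a' ∈ threeFourFive,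
      ∀ i' ∈ Finset.Icc 2 a', Disjoint (Xab a b) (Xi a' i'))
    -- all edges of H lie inside classes
    (hin : ∀ e ∈ H.edgeFinset,
      (∃ a ∈ threeFourFive, ∃ b ∈ threeFourFive, e ∈ (Xab a b).sym2) ∨
      (∃ a ∈ threeFourFive, ∃ i ∈ Finset.Icc 2 a, e ∈ (Xi a i).sym2)) :
    (∃ 𝒜 : Finset (Finset (Sym2 V)),
        (∀ O ∈ 𝒜, IsAtomOf Xab Xi O) ∧
        (∀ O ∈ 𝒜, ∀ O' ∈ 𝒜, O ≠ O' → Disjoint O O') ∧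
        H.edgeFinset = 𝒜.biUnion id) ↔
      ((∀ a ∈ threeFourFive, ∀ i ∈ Finset.Icc 2 a,
          (H.edgeFinset.filter
            (· ∈ (Xab a 3 ∪ Xab a 4 ∪ Xab a 5).sym2)).card =
          (H.edgeFinset.filter (· ∈ (Xi a i).sym2)).card) ∧
       (∀ a ∈ threeFourFive, ∀ b ∈ threeFourFive,
          (H.edgeFinset.filter (· ∈ (Xab a b).sym2)).card =
          (H.edgeFinset.filter (· ∈ (Xab b a).sym2)).card)) := by
  have hcds := classSet_disjoint Xab Xi hdisj1 hdisj2 hdisj3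
  have hinE : ∀ e ∈ H.edgeFinset, ∃ j, ValidIdx j ∧ e ∈ (classSet Xab Xi j).sym2 := by
    intro e he
    rcases hin e he with ⟨a, ha, b, hb, hab⟩ | ⟨a, ha, i, hi, hai⟩
    · exact ⟨(true, a, b), ⟨ha, hb⟩, hab⟩
    · exact ⟨(false, a, i), ⟨ha, hi⟩, hai⟩
  constructor
  · rintro ⟨𝒜, hAtom, hDisj, hUnion⟩
    have hsplit : ∀ X : Finset V, (H.edgeFinset.filter (· ∈ X.sym2)).card
        = ∑ O ∈ 𝒜, (O.filter (· ∈ X.sym2)).card := by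
      intro X
      rw [hUnion, Finset.filter_biUnion, Finset.card_biUnion]
      · rfl
      · intro x hx y hy hxy
        exact Finset.disjoint_filter_filter (hDisj x hx y hy hxy)
    constructor
    · intro a ha i hi
      rw [union_card Xab Xi hcds H.edgeFinset hinE ha, hsplit (Xi a i),
        Finset.sum_congr rfl (fun b (hb : b ∈ threeFourFive) => hsplit (Xab a b)),
        Finset.sum_comm]
      exact Finset.sum_congr rfl (fun O hO => atom_row Xab Xi hcds (hAtom O hO) ha hi)
    · intro a ha b hb
      rw [hsplit (Xab a b), hsplit (Xab b a)]
      exact Finset.sum_congr rfl (fun O hO => atom_sym Xab Xi hcds (hAtom O hO) ha hb)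
  · rintro ⟨h1, h2⟩
    have hk : ∀ a ∈ threeFourFive, ∀ i ∈ Finset.Icc 2 a,
        (H.edgeFinset.filter (· ∈ (Xi a i).sym2)).card
          = ∑ b ∈ threeFourFive, (H.edgeFinset.filter (· ∈ (Xab a b).sym2)).card := by
      intro a ha i hi
      rw [← h1 a ha i hi, union_card Xab Xi hcds H.edgeFinset hinE ha]
    exact decompose Xab Xi hcds H.edgeFinset.card H.edgeFinset le_rfl hinE hk h2
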